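/- Let X be a real Banach space and let (xₙ) be a sequence in X that converges uniformly weakly to some x ∈ X. Then (xₙ) is Cesàro convergent to x, i.e., the arithmetic means n⁻¹ · Σ_{k=1}^{n} x_k converge in norm to x. -/

import Mathlib

open Filter Topology

/-- A sequence `(xₙ)` in a real Banach space converges uniformly weakly to `x` if for every
`ε > 0` there is `N ∈ ℕ` such that `{n : |x*(xₙ - x)| > ε}` has at most `N` elements for every
`x*` in the closed unit ball of the dual. -/
def UnifWeaklyConvergent {X : Type*} [NormedAddCommGroup X] [NormedSpace ℝ X]
    (x : ℕ → X) (l : X) : Prop :=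
  ∀ ε : ℝ, 0 < ε → ∃ N : ℕ, ∀ f : X →L[ℝ] ℝ, ‖f‖ ≤ 1 →
    {n : ℕ | ε < |f (x n - l)|}.encard ≤ (N : ℕ∞)

lemma norm_smul_clm {X : Type*} [NormedAddCommGroup X] [NormedSpace ℝ X]
    (c : ℝ) (f : X →L[ℝ] ℝ) : ‖c • f‖ ≤ |c| * ‖f‖ := by
  simpa using ContinuousLinearMap.opNorm_smul_le c f

/-- Uniform weak convergence implies weak convergence. -/
lemma weak_conv_of_unif {X : Type*} [NormedAddCommGroup X] [NormedSpace ℝ X]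
    (x : ℕ → X) (l : X) (h : UnifWeaklyConvergent x l) (f : X →L[ℝ] ℝ) :
    Filter.Tendsto (fun n => f (x n - l)) atTop (nhds 0) := by
  rw [NormedAddCommGroup.tendsto_nhds_zero]
  intro ε hε
  have hpos : (0:ℝ) < ‖f‖ + 1 := by positivity
  obtain ⟨N, hN⟩ := h (ε / (2 * (‖f‖ + 1))) (by positivity)
  set g : X →L[ℝ] ℝ := (‖f‖ + 1)⁻¹ • f with hg
  have hgnorm : ‖g‖ ≤ 1 := by
    rw [hg]
    refine le_trans (norm_smul_clm _ _) ?_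
    rw [abs_inv, abs_of_pos hpos, inv_mul_le_iff₀ hpos]
    nlinarith
  have hfin : {n : ℕ | ε / (2 * (‖f‖ + 1)) < |g (x n - l)|}.Finite :=
    Set.finite_of_encard_le_coe (hN g hgnorm)
  have hsub : {n : ℕ | ε ≤ ‖f (x n - l)‖} ⊆
      {n : ℕ | ε / (2 * (‖f‖ + 1)) < |g (x n - l)|} := by
    intro n hn
    simp only [Set.mem_setOf_eq, Real.norm_eq_abs] at hn ⊢
    have hgv : g (x n - l) = (‖f‖ + 1)⁻¹ * f (x n - l) := rfl
    rw [hgv, abs_mul, abs_inv, abs_of_pos hpos]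
    calc ε / (2 * (‖f‖ + 1)) < ε / (‖f‖ + 1) := by
          apply div_lt_div_of_pos_left hε hpos; linarith
      _ ≤ |f (x n - l)| / (‖f‖ + 1) := by gcongr
      _ = (‖f‖ + 1)⁻¹ * |f (x n - l)| := by rw [div_eq_inv_mul]
  have hfin' : {n : ℕ | ε ≤ ‖f (x n - l)‖}.Finite := hfin.subset hsub
  have hev : ∀ᶠ n in atTop, n ∉ {n : ℕ | ε ≤ ‖f (x n - l)‖} := by
    rw [← Nat.cofinite_eq_atTop]
    exact hfin'.compl_mem_cofinite
  filter_upwards [hev] with n hn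
  simpa using lt_of_not_ge hn

/-- Uniform weak convergence implies norm boundedness of the sequence (Banach–Steinhaus). -/
lemma bdd_of_unif {X : Type*} [NormedAddCommGroup X] [NormedSpace ℝ X]
    (x : ℕ → X) (l : X) (h : UnifWeaklyConvergent x l) :
    ∃ C : ℝ, 0 ≤ C ∧ ∀ n, ‖x n - l‖ ≤ C := by
  set g : ℕ → (StrongDual ℝ X) →L[ℝ] ℝ :=
    fun n => NormedSpace.inclusionInDoubleDual ℝ X (x n - l) with hgdef
  have hpt : ∀ f : StrongDual ℝ X, ∃ C, ∀ n, ‖g n f‖ ≤ C := by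
    intro f
    obtain ⟨C, hC⟩ := (weak_conv_of_unif x l h f).norm.bddAbove_range
    exact ⟨C, fun n => hC (Set.mem_range_self n)⟩
  obtain ⟨C', hC'⟩ := banach_steinhaus hpt
  refine ⟨max C' 0, le_max_right _ _, fun n => ?_⟩
  have heq : ‖x n - l‖ = ‖g n‖ := by
    rw [hgdef]
    exact ((NormedSpace.inclusionInDoubleDualLi ℝ (E := X)).norm_map (x n - l)).symm
  rw [heq]
  exact le_trans (hC' n) (le_max_left _ _)

theorem statement4 {X : Type*} [NormedAddCommGroup X] [NormedSpace ℝ X] [CompleteSpace X]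
    (x : ℕ → X) (l : X) (h : UnifWeaklyConvergent x l) :
    Tendsto (fun n : ℕ => (n : ℝ)⁻¹ • ∑ k ∈ Finset.range n, x k) atTop (nhds l) := by
  obtain ⟨C, hC0, hC⟩ := bdd_of_unif x l h
  rw [Metric.tendsto_atTop]
  intro ε hε
  obtain ⟨N, hN⟩ := h (ε / 4) (by positivity)
  -- key norm bound on partial sums of the differences
  have key : ∀ n : ℕ, ‖∑ k ∈ Finset.range n, (x k - l)‖ ≤ N * C + n * (ε / 4) := by
    intro n
    apply NormedSpace.norm_le_dual_bound ℝ _ (by positivity)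
    intro f
    by_cases hf : f = 0
    · simp [hf]
    have hfpos : 0 < ‖f‖ := norm_pos_iff.mpr hf
    set g : X →L[ℝ] ℝ := ‖f‖⁻¹ • f with hg
    have hgnorm : ‖g‖ ≤ 1 := by
      rw [hg]
      refine le_trans (norm_smul_clm _ _) ?_
      rw [abs_inv, abs_of_pos hfpos, inv_mul_le_iff₀ hfpos]
      nlinarith
    -- the bad set as a finset
    set B : Finset ℕ := (Finset.range n).filter (fun k => ε / 4 < |g (x k - l)|) with hB
    have hBcard : (B.card : ℕ∞) ≤ (N : ℕ∞) := by
      have hsub : (B : Set ℕ) ⊆ {k : ℕ | ε / 4 < |g (x k - l)|} := by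
        intro k hk
        simp only [hB, Finset.coe_filter, Set.mem_setOf_eq] at hk
        exact hk.2
      calc (B.card : ℕ∞) = (B : Set ℕ).encard := (Set.encard_coe_eq_coe_finsetCard B).symm
        _ ≤ {k : ℕ | ε / 4 < |g (x k - l)|}.encard := Set.encard_mono hsub
        _ ≤ (N : ℕ∞) := hN g hgnorm
    have hBcard' : (B.card : ℝ) ≤ (N : ℝ) := by exact_mod_cast Nat.cast_le.mp hBcard
    have step : ∀ k ∈ Finset.range n, ‖f (x k - l)‖ ≤
        (if k ∈ B then C * ‖f‖ else ε / 4 * ‖f‖) := by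
      intro k hk
      by_cases hkB : k ∈ B
      · simp only [hkB, if_true]
        calc ‖f (x k - l)‖ ≤ ‖f‖ * ‖x k - l‖ := f.le_opNorm _
          _ ≤ ‖f‖ * C := mul_le_mul_of_nonneg_left (hC k) (norm_nonneg f)
          _ = C * ‖f‖ := mul_comm _ _
      · simp only [hkB, if_false]
        have hle : ¬ (ε / 4 < |g (x k - l)|) := by
          intro hlt
          exact hkB (Finset.mem_filter.mpr ⟨hk, hlt⟩)
        push_neg at hle
        have hgv : g (x k - l) = ‖f‖⁻¹ * f (x k - l) := rfl
        rw [hgv, abs_mul, abs_inv, abs_of_pos hfpos, inv_mul_eq_div,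
          div_le_iff₀ hfpos] at hle
        simpa [Real.norm_eq_abs] using hle
    have e1 : (Finset.range n).filter (fun k => k ∈ B) = B := by
      ext k
      simp only [Finset.mem_filter, hB]
      tauto
    have e2 : ((Finset.range n).filter (fun k => k ∉ B)).card ≤ n := by
      simpa using Finset.card_filter_le (Finset.range n) (fun k => k ∉ B)
    have h1 : (B.card : ℝ) * (C * ‖f‖) ≤ N * (C * ‖f‖) :=
      mul_le_mul_of_nonneg_right hBcard' (by positivity)
    calc ‖f (∑ k ∈ Finset.range n, (x k - l))‖
        = ‖∑ k ∈ Finset.range n, f (x k - l)‖ := by rw [map_sum]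
      _ ≤ ∑ k ∈ Finset.range n, ‖f (x k - l)‖ := norm_sum_le _ _
      _ ≤ ∑ k ∈ Finset.range n, (if k ∈ B then C * ‖f‖ else ε / 4 * ‖f‖) :=
          Finset.sum_le_sum step
      _ = B.card * (C * ‖f‖) +
            ((Finset.range n).filter (fun k => k ∉ B)).card * (ε / 4 * ‖f‖) := by
          rw [Finset.sum_ite, Finset.sum_const, Finset.sum_const, e1,
            nsmul_eq_mul, nsmul_eq_mul]
      _ ≤ B.card * (C * ‖f‖) + n * (ε / 4 * ‖f‖) := by
          apply add_le_add_right
          apply mul_le_mul_of_nonneg_right _ (by positivity)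
          exact_mod_cast e2
      _ ≤ N * (C * ‖f‖) + n * (ε / 4 * ‖f‖) := add_le_add_left h1 _
      _ = (N * C + n * (ε / 4)) * ‖f‖ := by ring
  -- choose n₀ large
  obtain ⟨n₀, hn₀⟩ : ∃ n₀ : ℕ, (N * C) / (ε / 4) < n₀ := exists_nat_gt _
  refine ⟨max n₀ 1, fun n hn => ?_⟩
  have hn1 : 1 ≤ n := le_trans (le_max_right _ _) hn
  have hnpos : (0:ℝ) < n := by exact_mod_cast hn1
  have hnn : (N * C) / (ε / 4) < (n : ℝ) := by
    calc (N * C) / (ε / 4) < (n₀ : ℝ) := hn₀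
      _ ≤ n := by exact_mod_cast le_trans (le_max_left _ _) hn
  have hNC : (N : ℝ) * C < n * (ε / 4) := by
    have := (div_lt_iff₀ (show (0:ℝ) < ε / 4 by positivity)).mp hnn
    linarith
  have hmean : (n : ℝ)⁻¹ • ∑ k ∈ Finset.range n, x k - l
      = (n : ℝ)⁻¹ • ∑ k ∈ Finset.range n, (x k - l) := by
    rw [Finset.sum_sub_distrib, smul_sub, Finset.sum_const, Finset.card_range]
    congr 1
    rw [← Nat.cast_smul_eq_nsmul ℝ, smul_smul, inv_mul_cancel₀ (ne_of_gt hnpos), one_smul]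
  rw [dist_eq_norm, hmean, norm_smul, norm_inv, Real.norm_natCast]
  calc (n:ℝ)⁻¹ * ‖∑ k ∈ Finset.range n, (x k - l)‖
      ≤ (n:ℝ)⁻¹ * (N * C + n * (ε / 4)) :=
        mul_le_mul_of_nonneg_left (key n) (by positivity)
    _ < (n:ℝ)⁻¹ * (n * (ε / 4) + n * (ε / 4)) := by
        apply mul_lt_mul_of_pos_left (by linarith) (by positivity)
    _ = ε / 2 := by field_simp; ring
    _ < ε := by linarith
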